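/- Let 𝔪 be a non-degenerate graded nilpotent Lie algebra and y ∈ 𝔪_{-1} with rank(ad y) = 1. Then [y, 𝔪_{-i}] = 0 for all i ≥ 2, i.e., the image of ad y is contained in 𝔪_{-2} and ad y vanishes on ⊕_{i≥2} 𝔪_{-i}. -/

import Mathlib

open Module LinearMap

/-- if `y ∈ 𝔪_{-1}` has `rank (ad y) = 1` in a non-degenerate
GNLA, then `⁅y, 𝔪_{-i}⁆ = 0` for all `i ≥ 2`, and the image of `ad y` is
contained in `𝔪_{-2}`. -/
theorem stmt4 {k L : Type*} [Field k] [CharZero k] [LieRing L] [LieAlgebra k L]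
    (m : ℕ → Submodule k L)
    (hsum : DirectSum.IsInternal fun i => m i)
    (h0 : m 0 = ⊥)
    (μ : ℕ) (hdepth : ∀ i, μ < i → m i = ⊥)
    (hbr : ∀ i j, ∀ x ∈ m i, ∀ y ∈ m j, ⁅x, y⁆ ∈ m (i + j))
    (hgen : ∀ i, 1 ≤ i →
      m (i + 1) = Submodule.span k {z | ∃ u ∈ m 1, ∃ v ∈ m i, ⁅u, v⁆ = z})
    (hnd : ∀ y ∈ m 1, (∀ z : L, ⁅y, z⁆ = 0) → y = 0)
    (y : L) (hy : y ∈ m 1)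
    (hrk : finrank k (LinearMap.range (LieAlgebra.ad k L y)) = 1) :
    (∀ i, 2 ≤ i → ∀ z ∈ m i, ⁅y, z⁆ = 0) ∧
    LinearMap.range (LieAlgebra.ad k L y) ≤ m 2 := by
  classical
  have hdisj : ∀ i j : ℕ, i ≠ j → Disjoint (m i) (m j) := fun i j hij =>
    hsum.submodule_iSupIndep.pairwiseDisjoint hij
  have htop : (⨆ i, m i) = ⊤ := hsum.submodule_iSup_eq_top
  -- Step A: there is u₁ ∈ m 1 with ⁅y, u₁⁆ ≠ 0
  by_cases h1 : ∀ u ∈ m 1, ⁅y, u⁆ = 0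
  · exfalso
    have hall : ∀ j, ∀ z ∈ m j, ⁅y, z⁆ = 0 := by
      intro j
      induction j using Nat.strong_induction_on with
      | _ j ih =>
        match j with
        | 0 =>
          intro z hz
          rw [h0, Submodule.mem_bot] at hz
          simp [hz]
        | 1 => exact h1
        | (n+2) =>
          intro z hz
          rw [hgen (n+1) (by omega)] at hz
          induction hz using Submodule.span_induction with
          | mem x hx =>
            obtain ⟨u, hu, v, hv, huv⟩ := hx
            rw [← huv, leibniz_lie, h1 u hu, ih (n+1) (by omega) v hv]
            simp
          | zero => simp
          | add a b _ _ ha hb => rw [lie_add, ha, hb, add_zero]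
          | smul c a _ ha => rw [lie_smul, ha, smul_zero]
    have hy0 : y = 0 := by
      apply hnd y hy
      intro z
      have hz : z ∈ ⨆ i, m i := htop ▸ Submodule.mem_top
      refine Submodule.iSup_induction _ (motive := fun x => ⁅y, x⁆ = 0) hz
        (fun i x hx => hall i x hx) (by simp) ?_
      intro a b ha hb; rw [lie_add, ha, hb, add_zero]
    rw [hy0, map_zero, LinearMap.range_zero] at hrk
    simp at hrk
  · push_neg at h1
    obtain ⟨u1, hu1, hw0⟩ := h1
    set w := ⁅y, u1⁆ with hwdef
    have hwm2 : w ∈ m 2 := hbr 1 1 y hy u1 hu1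
    have hwrange : w ∈ LinearMap.range (LieAlgebra.ad k L y) :=
      ⟨u1, by simp [LieAlgebra.ad_apply, hwdef]⟩
    obtain ⟨v, hv0, hvspan⟩ := finrank_eq_one_iff'.mp hrk
    obtain ⟨c, hc⟩ := hvspan ⟨w, hwrange⟩
    have hcL : c • (v : L) = w := congrArg Subtype.val hc
    have hc0 : c ≠ 0 := by
      rintro rfl
      apply hw0
      rw [← hcL, zero_smul]
    have hvm2 : (v : L) ∈ m 2 := by
      have : (v : L) = c⁻¹ • w := by
        rw [← hcL, smul_smul, inv_mul_cancel₀ hc0, one_smul]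
      rw [this]; exact Submodule.smul_mem _ _ hwm2
    have hrange : LinearMap.range (LieAlgebra.ad k L y) ≤ m 2 := by
      rintro x hx
      obtain ⟨c', hc'⟩ := hvspan ⟨x, hx⟩
      have hcL' : c' • (v : L) = x := congrArg Subtype.val hc'
      rw [← hcL']
      exact Submodule.smul_mem _ _ hvm2
    refine ⟨?_, hrange⟩
    intro i hi z hz
    have hz1 : ⁅y, z⁆ ∈ m 2 := hrange ⟨z, by simp [LieAlgebra.ad_apply]⟩
    have hz2 : ⁅y, z⁆ ∈ m (1 + i) := hbr 1 i y hy z hz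
    exact Submodule.disjoint_def.mp (hdisj 2 (1 + i) (by omega)) _ hz1 hz2
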